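/- (Lemma 3.4) Let H be a numerical semigroup of genus g and let s_1 > s_2 > ⋯ be its associated sequence. Then s_i ≤ 2g − 2i for 1 ≤ i ≤ g, and s_i = g − i − 1 for every i ≥ g + 1. -/

import Mathlib

/-- Lemma 3.4: Let `H` be a numerical semigroup of genus `g` and let
`s 1 > s 2 > ⋯` be its associated sequence (the strictly decreasing enumeration of
`{m : ℤ | m + 1 ∉ ℤ \ H}` where `ℤ \ H` means integers not lying in `H`).
Then `s i ≤ 2 g - 2 i` for `1 ≤ i ≤ g`, and `s i = g - i - 1` for `i ≥ g + 1`. -/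
theorem associated_sequence_bound (g : ℕ) (H : Set ℕ) (s : ℕ → ℤ)
    (h0 : 0 ∈ H) (hadd : ∀ x ∈ H, ∀ y ∈ H, x + y ∈ H)
    (hfin : {n : ℕ | n ∉ H}.Finite) (hcard : {n : ℕ | n ∉ H}.ncard = g)
    (hsanti : ∀ i j, 1 ≤ i → i < j → s j < s i)
    (hsrange : ∀ m : ℤ, (∃ i, 1 ≤ i ∧ s i = m) ↔ ∀ n ∈ H, (n : ℤ) ≠ m + 1) :
    (∀ i, 1 ≤ i → i ≤ g → s i ≤ 2 * (g : ℤ) - 2 * (i : ℤ)) ∧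
    (∀ i, g + 1 ≤ i → s i = (g : ℤ) - (i : ℤ) - 1) := by
  classical
  set G : Finset ℕ := hfin.toFinset with hGdef
  have hGmem : ∀ n : ℕ, n ∈ G ↔ n ∉ H := by intro n; simp [hGdef]
  have hGcard : G.card = g := by
    rw [hGdef, ← Set.ncard_eq_toFinset_card _ hfin, hcard]
  have hT : ∀ i, 1 ≤ i → ∀ n ∈ H, (n:ℤ) ≠ s i + 1 :=
    fun i hi => (hsrange (s i)).mp ⟨i, hi, rfl⟩
  have hidx : ∀ m : ℤ, (∀ n ∈ H, (n:ℤ) ≠ m + 1) → ∃ j, 1 ≤ j ∧ s j = m :=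
    fun m h => (hsrange m).mpr h
  have hmono : ∀ i j, 1 ≤ i → i ≤ j → s j ≤ s i := by
    intro i j hi hij
    rcases eq_or_lt_of_le hij with h | h
    · rw [h]
    · exact (hsanti i j hi h).le
  have hne1 : ∀ i, 1 ≤ i → s i ≠ -1 := by
    intro i hi h
    exact hT i hi 0 h0 (by rw [h]; simp)
  have hneg : ∀ m : ℤ, m ≤ -2 → ∀ n ∈ H, (n:ℤ) ≠ m + 1 := by
    intro m hm n hn
    omega
  let pick : ℤ → ℕ := fun m => if h : ∀ n ∈ H, (n:ℤ) ≠ m + 1 then (hidx m h).choose else 0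
  have hpick : ∀ m : ℤ, (∀ n ∈ H, (n:ℤ) ≠ m + 1) → 1 ≤ pick m ∧ s (pick m) = m := by
    intro m h
    simp only [pick, dif_pos h]
    exact ⟨(hidx m h).choose_spec.1, (hidx m h).choose_spec.2⟩
  have lemA : ∀ i : ℕ, 1 ≤ i → ∀ F : Finset ℤ,
      (∀ m ∈ F, (∀ n ∈ H, (n:ℤ) ≠ m + 1) ∧ s i < m) → F.card ≤ i - 1 := by
    intro i hi F hF
    have h1 : F.card ≤ (Finset.Ico 1 i).card := by
      apply Finset.card_le_card_of_injOn pick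
      · intro m hm
        obtain ⟨hmT, hms⟩ := hF m hm
        obtain ⟨h1, h2⟩ := hpick m hmT
        simp only [Finset.coe_Ico, Set.mem_Ico]
        refine ⟨h1, ?_⟩
        by_contra hc
        push_neg at hc
        have hle := hmono i (pick m) hi hc
        rw [h2] at hle
        exact absurd hle (not_le.mpr hms)
      · intro m1 h1 m2 h2 he
        have a1 := (hpick m1 (hF m1 h1).1).2
        have a2 := (hpick m2 (hF m2 h2).1).2
        rw [← a1, ← a2, he]
    simpa using h1
  have lemB : ∀ i : ℕ, 1 ≤ i → ∀ F : Finset ℤ,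
      (∀ m : ℤ, (∀ n ∈ H, (n:ℤ) ≠ m + 1) → s i ≤ m → m ∈ F) → i ≤ F.card := by
    intro i hi F hF
    have h1 : (Finset.Icc 1 i).card ≤ F.card := by
      apply Finset.card_le_card_of_injOn s
      · intro j hj
        simp only [Finset.coe_Icc, Set.mem_Icc] at hj
        exact hF (s j) (hT j hj.1) (hmono j i hj.1 hj.2)
      · intro j1 hj1 j2 hj2 he
        simp only [Finset.coe_Icc, Set.mem_Icc] at hj1 hj2
        by_contra hne
        rcases Nat.lt_or_ge j1 j2 with h | h
        · exact absurd he (hsanti j1 j2 hj1.1 h).ne'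
        · rcases Nat.lt_or_ge j2 j1 with h' | h'
          · exact absurd he (hsanti j2 j1 hj2.1 h').ne
          · omega
    simpa using h1
  have castinj : Function.Injective (fun n : ℕ => (n:ℤ) - 1) := by
    intro a b h
    simp only [] at h
    omega
  set G1 : Finset ℤ := G.image (fun n : ℕ => (n:ℤ) - 1) with hG1def
  have hG1card : G1.card = g := by
    rw [hG1def, Finset.card_image_of_injective _ castinj, hGcard]
  have hG1mem : ∀ m : ℤ, m ∈ G1 ↔ ∃ n, n ∉ H ∧ (n:ℤ) - 1 = m := by
    intro m; simp [hG1def, hGmem]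
  have hG1T : ∀ m ∈ G1, (∀ n ∈ H, (n:ℤ) ≠ m + 1) ∧ 0 ≤ m := by
    intro m hm
    obtain ⟨n, hn, rfl⟩ := (hG1mem m).mp hm
    constructor
    · intro n' hn' he
      have hnn : n' = n := by omega
      exact hn (hnn ▸ hn')
    · have : n ≠ 0 := fun h => hn (h ▸ h0)
      omega
  have hG1T' : ∀ m : ℤ, 0 ≤ m → (∀ n ∈ H, (n:ℤ) ≠ m + 1) → m ∈ G1 := by
    intro m hm hmT
    refine (hG1mem m).mpr ⟨(m+1).toNat, ?_, by omega⟩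
    intro hc
    exact hmT _ hc (by omega)
  -- key counting lemma for negative s i
  have hkey : ∀ i, 1 ≤ i → s i ≤ -2 → g + ((-2) - s i).toNat ≤ i - 1 := by
    intro i hi hsi2
    have hdisj : Disjoint G1 (Finset.Ioc (s i) (-2)) := by
      rw [Finset.disjoint_left]
      intro m hm hm2
      have h2 := (hG1T m hm).2
      simp only [Finset.mem_Ioc] at hm2
      omega
    have hmemF : ∀ m ∈ G1 ∪ Finset.Ioc (s i) (-2),
        (∀ n ∈ H, (n:ℤ) ≠ m + 1) ∧ s i < m := by
      intro m hm
      rcases Finset.mem_union.mp hm with h | h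
      · obtain ⟨h1, h2⟩ := hG1T m h
        exact ⟨h1, by omega⟩
      · simp only [Finset.mem_Ioc] at h
        exact ⟨hneg m h.2, h.1⟩
    have hle := lemA i hi _ hmemF
    rwa [Finset.card_union_of_disjoint hdisj, hG1card, Int.card_Ioc] at hle
  -- gap bound
  have hgap : ∀ a : ℕ, a ∉ H → a + 1 ≤ 2 * (G.filter (fun n => n ≤ a)).card := by
    intro a haH
    have ha1 : 1 ≤ a := by
      rcases Nat.eq_zero_or_pos a with h | h
      · exact absurd (h ▸ h0) haH
      · exact h
    set K := G.filter (fun n => n ≤ a) with hK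
    have haK : a ∈ K := by simp [hK, hGmem, haH]
    set C := (Finset.Ico 1 a).filter (fun n => n ∈ H) with hC
    have hCK : C.card ≤ (K.erase a).card := by
      apply Finset.card_le_card_of_injOn (fun x => a - x)
      · intro x hx
        simp only [hC, Finset.mem_coe, Finset.mem_filter, Finset.mem_Ico] at hx
        obtain ⟨⟨hx1, hxa⟩, hxH⟩ := hx
        have hsub : a - x ∉ H := by
          intro hc
          have := hadd _ hc _ hxH
          rw [Nat.sub_add_cancel hxa.le] at this
          exact haH this
        simp only [Finset.mem_coe, Finset.mem_erase, hK, Finset.mem_filter, hGmem]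
        exact ⟨by omega, hsub, by omega⟩
      · intro x1 hx1 x2 hx2 he
        simp only [hC, Finset.coe_filter, Set.mem_setOf_eq, Finset.mem_Ico] at hx1 hx2
        simp only [] at he
        omega
    have hD : (Finset.Ico 1 a).filter (fun n => ¬ n ∈ H) = K.erase a := by
      ext n
      simp only [Finset.mem_filter, Finset.mem_Ico, Finset.mem_erase, hK, hGmem]
      constructor
      · rintro ⟨⟨h1, h2⟩, h3⟩
        exact ⟨by omega, h3, by omega⟩
      · rintro ⟨h1, h2, h3⟩
        have : n ≠ 0 := fun h => h2 (h ▸ h0)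
        exact ⟨⟨by omega, by omega⟩, h2⟩
    have hpart : C.card + (K.erase a).card = a - 1 := by
      rw [← hD, hC]
      rw [Finset.card_filter_add_card_filter_not]
      simp
    have herase : (K.erase a).card = K.card - 1 := Finset.card_erase_of_mem haK
    have hKpos : 1 ≤ K.card := Finset.card_pos.mpr ⟨a, haK⟩
    omega
  -- part 2
  have part2 : ∀ i, g + 1 ≤ i → s i = (g:ℤ) - (i:ℤ) - 1 := by
    intro i hi
    have hi1 : 1 ≤ i := by omega
    have hsi2 : s i ≤ -2 := by
      rcases le_or_gt (s i) (-2) with h | h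
      · exact h
      · have hne := hne1 i hi1
        have h0le : 0 ≤ s i := by omega
        have hle : i ≤ G1.card := by
          apply lemB i hi1
          intro m hmT hms
          exact hG1T' m (le_trans h0le hms) hmT
        rw [hG1card] at hle
        omega
    have hub : s i ≤ (g:ℤ) - (i:ℤ) - 1 := by
      have hle : i ≤ (G1 ∪ Finset.Icc (s i) (-2)).card := by
        apply lemB i hi1
        intro m hmT hms
        rcases le_or_gt 0 m with h | h
        · exact Finset.mem_union_left _ (hG1T' m h hmT)
        · have hm1 : m ≠ -1 := fun he => hmT 0 h0 (by omega)
          have hm2 : m ≤ -2 := by omega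
          exact Finset.mem_union_right _ (Finset.mem_Icc.mpr ⟨hms, hm2⟩)
      have hcard2 : (G1 ∪ Finset.Icc (s i) (-2)).card ≤
          G1.card + (Finset.Icc (s i) (-2)).card := Finset.card_union_le _ _
      rw [hG1card, Int.card_Icc] at hcard2
      omega
    have hlb := hkey i hi1 hsi2
    omega
  refine ⟨?_, part2⟩
  intro i hi hig
  have h0s : 0 ≤ s i := by
    rcases le_or_gt 0 (s i) with h | h
    · exact h
    · have hne := hne1 i hi
      have hsi2 : s i ≤ -2 := by omega
      have := hkey i hi hsi2
      omega
  set a : ℕ := (s i + 1).toNat with hadef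
  have haz : (a:ℤ) = s i + 1 := by rw [hadef]; omega
  have haH : a ∉ H := fun hc => (hT i hi a hc) haz
  have hgapa := hgap a haH
  have hmemF : ∀ m : ℤ, (∀ n ∈ H, (n:ℤ) ≠ m + 1) → s i ≤ m →
      m ∈ (G.filter (fun n => a ≤ n)).image (fun n : ℕ => (n:ℤ) - 1) := by
    intro m hmT hms
    have h0m : 0 ≤ m := le_trans h0s hms
    refine Finset.mem_image.mpr ⟨(m+1).toNat, ?_, by omega⟩
    simp only [Finset.mem_filter, hGmem]
    constructor
    · intro hc
      exact hmT _ hc (by omega)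
    · omega
  have hleB := lemB i hi _ hmemF
  rw [Finset.card_image_of_injective _ castinj] at hleB
  have hsplit : (G.filter (fun n => n ≤ a)).card + (G.filter (fun n => ¬ n ≤ a)).card = g := by
    rw [Finset.card_filter_add_card_filter_not, hGcard]
  have haG : a ∈ G := (hGmem a).mpr haH
  have hins : G.filter (fun n => a ≤ n) = insert a (G.filter (fun n => ¬ n ≤ a)) := by
    ext n
    simp only [Finset.mem_filter, Finset.mem_insert, not_le]
    constructor
    · rintro ⟨hn, hle⟩
      rcases eq_or_lt_of_le hle with h | h
      · exact Or.inl h.symm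
      · exact Or.inr ⟨hn, h⟩
    · rintro (h | ⟨hn, h⟩)
      · exact ⟨h ▸ haG, le_of_eq h.symm⟩
      · exact ⟨hn, h.le⟩
  have hnotmem : a ∉ G.filter (fun n => ¬ n ≤ a) := by
    simp
  have hinscard : (G.filter (fun n => a ≤ n)).card =
      (G.filter (fun n => ¬ n ≤ a)).card + 1 := by
    rw [hins, Finset.card_insert_of_notMem hnotmem]
  omega
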